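/- For 0 < p < 1/2, let q(p) = (1-p)p + p(1-p)/(1-2p)^2 and suppose mechanism M1 obtains revenue at least (1-p)p·A - (p(1-p)/(1-2p)^2)·C and mechanism M2 obtains revenue at least C, where A + C ≥ T ≥ 0 and A, C ≥ 0. Then the convex combination running M2 with probability q/(1+q) and M1 with probability 1/(1+q) obtains revenue at least T / (1 + 1/((1-p)p) + 1/(1-2p)^2). -/

import Mathlib

theorem convex_combination_approximation (p A C T M1 M2 : ℝ)
    (hp0 : 0 < p) (hp2 : p < 1/2)
    (hA : 0 ≤ A) (hC : 0 ≤ C) (hT : 0 ≤ T) (hAC : A + C ≥ T)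
    (hM1 : M1 ≥ (1 - p) * p * A - (p * (1 - p) / (1 - 2 * p) ^ 2) * C)
    (hM2 : M2 ≥ C) :
    (1 / (1 + ((1 - p) * p + p * (1 - p) / (1 - 2 * p) ^ 2))) * M1 +
      (((1 - p) * p + p * (1 - p) / (1 - 2 * p) ^ 2) /
        (1 + ((1 - p) * p + p * (1 - p) / (1 - 2 * p) ^ 2))) * M2
    ≥ T / (1 + 1 / ((1 - p) * p) + 1 / (1 - 2 * p) ^ 2) := by
  have h2p : 0 < 1 - 2 * p := by linarith
  have hs : (0:ℝ) < (1 - 2 * p) ^ 2 := by positivity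
  have hp1 : 0 < 1 - p := by linarith
  have ha : 0 < (1 - p) * p := by positivity
  have hb : 0 < p * (1 - p) / (1 - 2 * p) ^ 2 := by positivity
  set a := (1 - p) * p with hadef
  set b := p * (1 - p) / (1 - 2 * p) ^ 2 with hbdef
  have hq : 0 < 1 + (a + b) := by linarith
  have hden : 0 < 1 + 1 / a + 1 / (1 - 2 * p) ^ 2 := by positivity
  have hnum : a * T ≤ M1 + (a + b) * M2 := by
    have hb' : b * C ≥ 0 := by positivity
    nlinarith [mul_le_mul_of_nonneg_left hAC (le_of_lt ha), mul_le_mul_of_nonneg_left hM2 (le_of_lt (by linarith : (0:ℝ) < a + b))]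
  have hrw : 1 + 1 / a + 1 / (1 - 2 * p) ^ 2 = (1 + (a + b)) / a := by
    rw [hbdef, hadef]
    field_simp
    ring
  rw [hrw, ge_iff_le, div_div_eq_mul_div, div_le_iff₀ hq]
  have : (1 / (1 + (a + b))) * M1 + ((a + b) / (1 + (a + b))) * M2 =
      (M1 + (a + b) * M2) / (1 + (a + b)) := by field_simp
  rw [this, div_mul_cancel₀ _ (ne_of_gt hq)]
  nlinarith
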